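/- Let T₁ and T₂ be trees and let Γ be a subgroup of Aut(T₁) × Aut(T₂), acting componentwise on V(T₁)×V(T₂); assume this action is free and transitive on V(T₁)×V(T₂). Fix v₀ = (v₁,v₂) ∈ V(T₁)×V(T₂), and for g = (g₁,g₂) ∈ Γ define sh(g) = (d(v₁, g₁ v₁), d(v₂, g₂ v₂)). Let A = { g ∈ Γ : sh(g) = (1,0) } and B = { g ∈ Γ : sh(g) = (0,1) }. Then for every g ∈ Γ with sh(g) = (m,n) there exists a unique pair of finite sequences (a₁,…,a_m) ∈ Aᵐ and (b₁,…,b_n) ∈ Bⁿ with g = a₁⋯a_m·b₁⋯b_n, and also a unique pair (b′₁,…,b′_n) ∈ Bⁿ and (a′₁,…,a′_m) ∈ Aᵐ with g = b′₁⋯b′_n·a′₁⋯a′_m. -/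

import Mathlib

open SimpleGraph

private lemma iso_dist {V : Type*} {T : SimpleGraph V} (hc : T.Connected)
    (e : T ≃g T) (a b : V) : T.dist (e a) (e b) = T.dist a b := by
  have key : ∀ (f : T ≃g T) (x y : V), T.dist (f x) (f y) ≤ T.dist x y := by
    intro f x y
    obtain ⟨p, hp⟩ := hc.exists_walk_length_eq_dist x y
    calc T.dist (f x) (f y) ≤ (p.map f.toHom).length := dist_le _
      _ = T.dist x y := by rw [Walk.length_map, hp]
  refine le_antisymm (key e a b) ?_
  have := key e.symm (e a) (e b)
  simpa using this

private lemma exists_adj_dist {V : Type*} {T : SimpleGraph V} (hc : T.Connected)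
    {v y : V} {m : ℕ} (h : T.dist v y = m + 1) :
    ∃ z, T.Adj v z ∧ T.dist z y = m := by
  obtain ⟨p, hp⟩ := hc.exists_walk_length_eq_dist v y
  rw [h] at hp
  cases p with
  | nil => simp at hp
  | @cons _ z _ hadj q =>
    refine ⟨z, hadj, le_antisymm ?_ ?_⟩
    · have h2 := dist_le q
      simp only [Walk.length_cons] at hp
      omega
    · have h3 := hc.dist_triangle (u := v) (v := z) (w := y)
      have h4 : T.dist v z = 1 := dist_eq_one_iff_adj.mpr hadj
      omega

private lemma unique_adj_dist {V : Type*} {T : SimpleGraph V} (ht : T.IsTree)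
    {v y z z' : V} {m : ℕ} (hz : T.Adj v z) (hz' : T.Adj v z')
    (hd : T.dist v y = m + 1) (h1 : T.dist z y = m) (h2 : T.dist z' y = m) :
    z = z' := by
  obtain ⟨p, hp⟩ := ht.isConnected.exists_walk_length_eq_dist z y
  obtain ⟨p', hp'⟩ := ht.isConnected.exists_walk_length_eq_dist z' y
  have hw : (p.cons hz).length = T.dist v y := by
    simp [Walk.length_cons, hp, h1, hd]
  have hw' : (p'.cons hz').length = T.dist v y := by
    simp [Walk.length_cons, hp', h2, hd]
  have hpath := Walk.isPath_of_length_eq_dist _ hw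
  have hpath' := Walk.isPath_of_length_eq_dist _ hw'
  have heq : (⟨p.cons hz, hpath⟩ : T.Path v y) = ⟨p'.cons hz', hpath'⟩ :=
    ht.IsAcyclic.path_unique _ _
  have := congrArg (fun w : T.Path v y => (w : T.Walk v y).getVert 1) heq
  simpa [Walk.getVert_cons_succ (n := 0)] using this

section Prods

variable {V₁ V₂ : Type*} {T₁ : SimpleGraph V₁} {T₂ : SimpleGraph V₂}

private lemma prod_fix₁ (v₁ : V₁) (l : List ((T₁ ≃g T₁) × (T₂ ≃g T₂)))
    (h : ∀ x ∈ l, x.1 v₁ = v₁) : l.prod.1 v₁ = v₁ := by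
  induction l with
  | nil => simp
  | cons x xs ih =>
    rw [List.prod_cons]
    show x.1 (xs.prod.1 v₁) = v₁
    rw [ih fun y hy => h y (List.mem_cons_of_mem _ hy)]
    exact h x (List.mem_cons_self (a := x) (l := xs))

private lemma prod_fix₂ (v₂ : V₂) (l : List ((T₁ ≃g T₁) × (T₂ ≃g T₂)))
    (h : ∀ x ∈ l, x.2 v₂ = v₂) : l.prod.2 v₂ = v₂ := by
  induction l with
  | nil => simp
  | cons x xs ih =>
    rw [List.prod_cons]
    show x.2 (xs.prod.2 v₂) = v₂
    rw [ih fun y hy => h y (List.mem_cons_of_mem _ hy)]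
    exact h x (List.mem_cons_self (a := x) (l := xs))

private lemma prod_dist₁ (hc : T₁.Connected) (v₁ : V₁)
    (l : List ((T₁ ≃g T₁) × (T₂ ≃g T₂)))
    (h : ∀ x ∈ l, T₁.dist v₁ (x.1 v₁) ≤ 1) :
    T₁.dist v₁ (l.prod.1 v₁) ≤ l.length := by
  induction l with
  | nil => simp
  | cons x xs ih =>
    rw [List.prod_cons]
    show T₁.dist v₁ (x.1 (xs.prod.1 v₁)) ≤ xs.length + 1
    calc T₁.dist v₁ (x.1 (xs.prod.1 v₁))
        ≤ T₁.dist v₁ (x.1 v₁) + T₁.dist (x.1 v₁) (x.1 (xs.prod.1 v₁)) := hc.dist_triangle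
      _ = T₁.dist v₁ (x.1 v₁) + T₁.dist v₁ (xs.prod.1 v₁) := by rw [iso_dist hc]
      _ ≤ 1 + xs.length :=
          add_le_add (h x (List.mem_cons_self (a := x) (l := xs))) (ih fun y hy => h y (List.mem_cons_of_mem _ hy))
      _ = xs.length + 1 := by omega

private lemma prod_dist₂ (hc : T₂.Connected) (v₂ : V₂)
    (l : List ((T₁ ≃g T₁) × (T₂ ≃g T₂)))
    (h : ∀ x ∈ l, T₂.dist v₂ (x.2 v₂) ≤ 1) :
    T₂.dist v₂ (l.prod.2 v₂) ≤ l.length := by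
  induction l with
  | nil => simp
  | cons x xs ih =>
    rw [List.prod_cons]
    show T₂.dist v₂ (x.2 (xs.prod.2 v₂)) ≤ xs.length + 1
    calc T₂.dist v₂ (x.2 (xs.prod.2 v₂))
        ≤ T₂.dist v₂ (x.2 v₂) + T₂.dist (x.2 v₂) (x.2 (xs.prod.2 v₂)) := hc.dist_triangle
      _ = T₂.dist v₂ (x.2 v₂) + T₂.dist v₂ (xs.prod.2 v₂) := by rw [iso_dist hc]
      _ ≤ 1 + xs.length :=
          add_le_add (h x (List.mem_cons_self (a := x) (l := xs))) (ih fun y hy => h y (List.mem_cons_of_mem _ hy))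
      _ = xs.length + 1 := by omega

private lemma free_inj {Γ : Subgroup ((T₁ ≃g T₁) × (T₂ ≃g T₂))}
    (hfree : ∀ g ∈ Γ, (∃ u : V₁ × V₂, (g.1 u.1, g.2 u.2) = u) → g = 1)
    {a b : (T₁ ≃g T₁) × (T₂ ≃g T₂)} (ha : a ∈ Γ) (hb : b ∈ Γ) (v₁ : V₁) (v₂ : V₂)
    (h1 : a.1 v₁ = b.1 v₁) (h2 : a.2 v₂ = b.2 v₂) : a = b := by
  have hfix : (((b⁻¹ * a).1) v₁, ((b⁻¹ * a).2) v₂) = ((v₁, v₂) : V₁ × V₂) := by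
    rw [Prod.mk.injEq]
    constructor
    · show b.1⁻¹ (a.1 v₁) = v₁
      rw [h1]; exact RelIso.inv_apply_self _ _
    · show b.2⁻¹ (a.2 v₂) = v₂
      rw [h2]; exact RelIso.inv_apply_self _ _
  have key := hfree (b⁻¹ * a) (mul_mem (inv_mem hb) ha) ⟨(v₁, v₂), hfix⟩
  exact (inv_mul_eq_one.mp key).symm

end Prods

private lemma key {V₁ V₂ : Type*}
    {T₁ : SimpleGraph V₁} {T₂ : SimpleGraph V₂}
    (h₁ : T₁.IsTree) (h₂ : T₂.IsTree)
    (Γ : Subgroup ((T₁ ≃g T₁) × (T₂ ≃g T₂)))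
    (hfree : ∀ g ∈ Γ, (∃ u : V₁ × V₂, (g.1 u.1, g.2 u.2) = u) → g = 1)
    (htrans : ∀ u w : V₁ × V₂, ∃ g ∈ Γ, (g.1 u.1, g.2 u.2) = w)
    (v₁ : V₁) (v₂ : V₂) :
    ∀ (N m n : ℕ) (g : (T₁ ≃g T₁) × (T₂ ≃g T₂)), m + n ≤ N → g ∈ Γ →
      T₁.dist v₁ (g.1 v₁) = m → T₂.dist v₂ (g.2 v₂) = n →
      ∃! p : (Fin m → (T₁ ≃g T₁) × (T₂ ≃g T₂)) × (Fin n → (T₁ ≃g T₁) × (T₂ ≃g T₂)),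
        (∀ i, p.1 i ∈ Γ ∧ T₁.dist v₁ ((p.1 i).1 v₁) = 1 ∧ T₂.dist v₂ ((p.1 i).2 v₂) = 0) ∧
        (∀ j, p.2 j ∈ Γ ∧ T₁.dist v₁ ((p.2 j).1 v₁) = 0 ∧ T₂.dist v₂ ((p.2 j).2 v₂) = 1) ∧
        g = (List.ofFn p.1).prod * (List.ofFn p.2).prod := by
  intro N
  induction N with
  | zero =>
    intro m n g hmn hg hm hn
    obtain rfl : m = 0 := by omega
    obtain rfl : n = 0 := by omega
    have hg1 : g = 1 := by
      refine hfree g hg ⟨(v₁, v₂), ?_⟩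
      rw [Prod.mk.injEq]
      exact ⟨(h₁.isConnected.dist_eq_zero_iff.mp hm).symm,
        (h₂.isConnected.dist_eq_zero_iff.mp hn).symm⟩
    refine ⟨(fun i => i.elim0, fun j => j.elim0), ⟨fun i => i.elim0, fun j => j.elim0, ?_⟩, ?_⟩
    · simp [hg1]
    · rintro ⟨q1, q2⟩ -
      rw [Prod.mk.injEq]
      constructor <;> (funext i; exact i.elim0)
  | succ N ih =>
    intro m n g hmn hg hm hn
    rcases m with _ | m
    · rcases n with _ | n
      · exact ih 0 0 g (by omega) hg hm hn
      · -- pull off a B element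
        obtain ⟨z, hadj, hz⟩ := exists_adj_dist h₂.isConnected hn
        obtain ⟨b, hbΓ, hbv⟩ := htrans (v₁, v₂) (v₁, z)
        rw [Prod.mk.injEq] at hbv
        obtain ⟨hbv1, hbv2⟩ := hbv
        have hbB : b ∈ Γ ∧ T₁.dist v₁ (b.1 v₁) = 0 ∧ T₂.dist v₂ (b.2 v₂) = 1 :=
          ⟨hbΓ, by rw [hbv1]; exact dist_self, by rw [hbv2]; exact dist_eq_one_iff_adj.mpr hadj⟩
        have hg'Γ : b⁻¹ * g ∈ Γ := mul_mem (inv_mem hbΓ) hg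
        have hg'1 : T₁.dist v₁ ((b⁻¹ * g).1 v₁) = 0 := by
          show T₁.dist v₁ (b.1⁻¹ (g.1 v₁)) = 0
          rw [← iso_dist h₁.isConnected b.1 v₁ (b.1⁻¹ (g.1 v₁)), RelIso.apply_inv_self, hbv1]
          exact hm
        have hg'2 : T₂.dist v₂ ((b⁻¹ * g).2 v₂) = n := by
          show T₂.dist v₂ (b.2⁻¹ (g.2 v₂)) = n
          rw [← iso_dist h₂.isConnected b.2 v₂ (b.2⁻¹ (g.2 v₂)), RelIso.apply_inv_self, hbv2]
          exact hz
        obtain ⟨p', hp', huniq⟩ := ih 0 n (b⁻¹ * g) (by omega) hg'Γ hg'1 hg'2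
        have hofn : List.ofFn (Fin.cons b p'.2 : Fin (n + 1) → _) = b :: List.ofFn p'.2 := by
          rw [List.ofFn_succ]
          simp [Fin.cons_zero, Fin.cons_succ]
        refine ⟨(p'.1, Fin.cons b p'.2), ⟨hp'.1, ?_, ?_⟩, ?_⟩
        · intro j
          refine Fin.cases ?_ ?_ j
          · show b ∈ Γ ∧ _ ∧ _
            exact hbB
          · intro i
            show p'.2 i ∈ Γ ∧ _ ∧ _
            exact hp'.2.1 i
        · have hA1 : (List.ofFn p'.1).prod = 1 := by
            rw [List.ofFn_zero, List.prod_nil]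
          have := hp'.2.2
          rw [hA1, one_mul] at this
          rw [hofn, List.prod_cons, hA1, one_mul, ← this, mul_inv_cancel_left]
        · rintro ⟨q1, q2⟩ ⟨hq1, hq2, hqprod⟩
          have hq2' : List.ofFn q2 = q2 0 :: List.ofFn (Fin.tail q2) := by
            rw [List.ofFn_succ]; rfl
          have hA1 : (List.ofFn q1).prod = 1 := by
            rw [List.ofFn_zero, List.prod_nil]
          have hprod : g = q2 0 * (List.ofFn (Fin.tail q2)).prod := by
            rw [hqprod, hA1, one_mul, hq2', List.prod_cons]
          have hdR : T₂.dist v₂ (((List.ofFn (Fin.tail q2)).prod).2 v₂) ≤ n := by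
            have := prod_dist₂ h₂.isConnected v₂ (List.ofFn (Fin.tail q2))
              (List.forall_mem_ofFn_iff.mpr fun j => le_of_eq (hq2 j.succ).2.2)
            simpa [List.length_ofFn] using this
          have hga : g.2 v₂ = (q2 0).2 (((List.ofFn (Fin.tail q2)).prod).2 v₂) := by
            rw [hprod]; rfl
          have htri : n + 1 ≤ 1 + T₂.dist v₂ (((List.ofFn (Fin.tail q2)).prod).2 v₂) := by
            calc n + 1 = T₂.dist v₂ (g.2 v₂) := hn.symm
              _ = T₂.dist v₂ ((q2 0).2 (((List.ofFn (Fin.tail q2)).prod).2 v₂)) := by rw [hga]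
              _ ≤ T₂.dist v₂ ((q2 0).2 v₂)
                  + T₂.dist ((q2 0).2 v₂) ((q2 0).2 (((List.ofFn (Fin.tail q2)).prod).2 v₂)) :=
                  h₂.isConnected.dist_triangle
              _ = 1 + T₂.dist v₂ (((List.ofFn (Fin.tail q2)).prod).2 v₂) := by
                  rw [(hq2 0).2.2, iso_dist h₂.isConnected]
          have hdReq : T₂.dist v₂ (((List.ofFn (Fin.tail q2)).prod).2 v₂) = n :=
            le_antisymm hdR (by omega)
          have hdz : T₂.dist ((q2 0).2 v₂) (g.2 v₂) = n := by
            rw [hga, iso_dist h₂.isConnected]; exact hdReq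
          have hb₀z : (q2 0).2 v₂ = z :=
            unique_adj_dist h₂ (dist_eq_one_iff_adj.mp (hq2 0).2.2) hadj hn hdz hz
          have hb₀1 : (q2 0).1 v₁ = v₁ :=
            (h₁.isConnected.dist_eq_zero_iff.mp (hq2 0).2.1).symm
          have hb₀b : q2 0 = b := free_inj hfree (hq2 0).1 hbΓ v₁ v₂
            (by rw [hb₀1, hbv1]) (by rw [hb₀z, hbv2])
          have hg'eq : b⁻¹ * g = (List.ofFn q1).prod * (List.ofFn (Fin.tail q2)).prod := by
            rw [hA1, one_mul, ← hb₀b, hprod, inv_mul_cancel_left]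
          have hup : (q1, Fin.tail q2) = p' :=
            huniq (q1, Fin.tail q2) ⟨hq1, fun j => hq2 j.succ, hg'eq⟩
          have e1 : q1 = p'.1 := congrArg Prod.fst hup
          have e2 : Fin.tail q2 = p'.2 := congrArg Prod.snd hup
          rw [Prod.mk.injEq]
          refine ⟨e1, ?_⟩
          rw [← e2, ← hb₀b]
          exact (Fin.cons_self_tail q2).symm
    · -- pull off an A element
      obtain ⟨z, hadj, hz⟩ := exists_adj_dist h₁.isConnected hm
      obtain ⟨a, haΓ, hav⟩ := htrans (v₁, v₂) (z, v₂)
      rw [Prod.mk.injEq] at hav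
      obtain ⟨hav1, hav2⟩ := hav
      have haA : a ∈ Γ ∧ T₁.dist v₁ (a.1 v₁) = 1 ∧ T₂.dist v₂ (a.2 v₂) = 0 :=
        ⟨haΓ, by rw [hav1]; exact dist_eq_one_iff_adj.mpr hadj, by rw [hav2]; exact dist_self⟩
      have hg'Γ : a⁻¹ * g ∈ Γ := mul_mem (inv_mem haΓ) hg
      have hg'1 : T₁.dist v₁ ((a⁻¹ * g).1 v₁) = m := by
        show T₁.dist v₁ (a.1⁻¹ (g.1 v₁)) = m
        rw [← iso_dist h₁.isConnected a.1 v₁ (a.1⁻¹ (g.1 v₁)), RelIso.apply_inv_self, hav1]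
        exact hz
      have hg'2 : T₂.dist v₂ ((a⁻¹ * g).2 v₂) = n := by
        show T₂.dist v₂ (a.2⁻¹ (g.2 v₂)) = n
        rw [← iso_dist h₂.isConnected a.2 v₂ (a.2⁻¹ (g.2 v₂)), RelIso.apply_inv_self, hav2]
        exact hn
      obtain ⟨p', hp', huniq⟩ := ih m n (a⁻¹ * g) (by omega) hg'Γ hg'1 hg'2
      have hofn : List.ofFn (Fin.cons a p'.1 : Fin (m + 1) → _) = a :: List.ofFn p'.1 := by
        rw [List.ofFn_succ]
        simp [Fin.cons_zero, Fin.cons_succ]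
      refine ⟨(Fin.cons a p'.1, p'.2), ⟨?_, hp'.2.1, ?_⟩, ?_⟩
      · intro i
        refine Fin.cases ?_ ?_ i
        · show a ∈ Γ ∧ _ ∧ _
          exact haA
        · intro j
          show p'.1 j ∈ Γ ∧ _ ∧ _
          exact hp'.1 j
      · rw [hofn, List.prod_cons, mul_assoc, ← hp'.2.2, mul_inv_cancel_left]
      · rintro ⟨q1, q2⟩ ⟨hq1, hq2, hqprod⟩
        have hq1' : List.ofFn q1 = q1 0 :: List.ofFn (Fin.tail q1) := by
          rw [List.ofFn_succ]; rfl
        have hprod : g = q1 0 * ((List.ofFn (Fin.tail q1)).prod * (List.ofFn q2).prod) := by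
          rw [hqprod, hq1', List.prod_cons, mul_assoc]
        have hQ1 : ((List.ofFn q2).prod).1 v₁ = v₁ :=
          prod_fix₁ v₁ _ (List.forall_mem_ofFn_iff.mpr fun j =>
            (h₁.isConnected.dist_eq_zero_iff.mp (hq2 j).2.1).symm)
        have hdR : T₁.dist v₁ (((List.ofFn (Fin.tail q1)).prod).1 v₁) ≤ m := by
          have := prod_dist₁ h₁.isConnected v₁ (List.ofFn (Fin.tail q1))
            (List.forall_mem_ofFn_iff.mpr fun i => le_of_eq (hq1 i.succ).2.1)
          simpa [List.length_ofFn] using this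
        have hRQ : (((List.ofFn (Fin.tail q1)).prod * (List.ofFn q2).prod)).1 v₁
            = ((List.ofFn (Fin.tail q1)).prod).1 v₁ := by
          show ((List.ofFn (Fin.tail q1)).prod).1 (((List.ofFn q2).prod).1 v₁) = _
          rw [hQ1]
        have hga : g.1 v₁ = (q1 0).1 (((List.ofFn (Fin.tail q1)).prod).1 v₁) := by
          rw [hprod]
          show (q1 0).1 ((((List.ofFn (Fin.tail q1)).prod * (List.ofFn q2).prod)).1 v₁) = _
          rw [hRQ]
        have htri : m + 1 ≤ 1 + T₁.dist v₁ (((List.ofFn (Fin.tail q1)).prod).1 v₁) := by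
          calc m + 1 = T₁.dist v₁ (g.1 v₁) := hm.symm
            _ = T₁.dist v₁ ((q1 0).1 (((List.ofFn (Fin.tail q1)).prod).1 v₁)) := by rw [hga]
            _ ≤ T₁.dist v₁ ((q1 0).1 v₁)
                + T₁.dist ((q1 0).1 v₁) ((q1 0).1 (((List.ofFn (Fin.tail q1)).prod).1 v₁)) :=
                h₁.isConnected.dist_triangle
            _ = 1 + T₁.dist v₁ (((List.ofFn (Fin.tail q1)).prod).1 v₁) := by
                rw [(hq1 0).2.1, iso_dist h₁.isConnected]
        have hdReq : T₁.dist v₁ (((List.ofFn (Fin.tail q1)).prod).1 v₁) = m :=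
          le_antisymm hdR (by omega)
        have hdz : T₁.dist ((q1 0).1 v₁) (g.1 v₁) = m := by
          rw [hga, iso_dist h₁.isConnected]; exact hdReq
        have ha₀z : (q1 0).1 v₁ = z :=
          unique_adj_dist h₁ (dist_eq_one_iff_adj.mp (hq1 0).2.1) hadj hm hdz hz
        have ha₀2 : (q1 0).2 v₂ = v₂ :=
          (h₂.isConnected.dist_eq_zero_iff.mp (hq1 0).2.2).symm
        have ha₀a : q1 0 = a := free_inj hfree (hq1 0).1 haΓ v₁ v₂
          (by rw [ha₀z, hav1]) (by rw [ha₀2, hav2])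
        have hg'eq : a⁻¹ * g = (List.ofFn (Fin.tail q1)).prod * (List.ofFn q2).prod := by
          rw [← ha₀a, hprod, inv_mul_cancel_left]
        have hup : (Fin.tail q1, q2) = p' :=
          huniq (Fin.tail q1, q2) ⟨fun i => hq1 i.succ, hq2, hg'eq⟩
        have e1 : Fin.tail q1 = p'.1 := congrArg Prod.fst hup
        have e2 : q2 = p'.2 := congrArg Prod.snd hup
        rw [Prod.mk.injEq]
        refine ⟨?_, e2⟩
        rw [← e1, ← ha₀a]
        exact (Fin.cons_self_tail q1).symm

private lemma key₂ {V₁ V₂ : Type*}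
    {T₁ : SimpleGraph V₁} {T₂ : SimpleGraph V₂}
    (h₁ : T₁.IsTree) (h₂ : T₂.IsTree)
    (Γ : Subgroup ((T₁ ≃g T₁) × (T₂ ≃g T₂)))
    (hfree : ∀ g ∈ Γ, (∃ u : V₁ × V₂, (g.1 u.1, g.2 u.2) = u) → g = 1)
    (htrans : ∀ u w : V₁ × V₂, ∃ g ∈ Γ, (g.1 u.1, g.2 u.2) = w)
    (v₁ : V₁) (v₂ : V₂) :
    ∀ (N m n : ℕ) (g : (T₁ ≃g T₁) × (T₂ ≃g T₂)), m + n ≤ N → g ∈ Γ →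
      T₁.dist v₁ (g.1 v₁) = m → T₂.dist v₂ (g.2 v₂) = n →
      ∃! p : (Fin n → (T₁ ≃g T₁) × (T₂ ≃g T₂)) × (Fin m → (T₁ ≃g T₁) × (T₂ ≃g T₂)),
        (∀ j, p.1 j ∈ Γ ∧ T₁.dist v₁ ((p.1 j).1 v₁) = 0 ∧ T₂.dist v₂ ((p.1 j).2 v₂) = 1) ∧
        (∀ i, p.2 i ∈ Γ ∧ T₁.dist v₁ ((p.2 i).1 v₁) = 1 ∧ T₂.dist v₂ ((p.2 i).2 v₂) = 0) ∧
        g = (List.ofFn p.1).prod * (List.ofFn p.2).prod := by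
  intro N
  induction N with
  | zero =>
    intro m n g hmn hg hm hn
    obtain rfl : m = 0 := by omega
    obtain rfl : n = 0 := by omega
    have hg1 : g = 1 := by
      refine hfree g hg ⟨(v₁, v₂), ?_⟩
      rw [Prod.mk.injEq]
      exact ⟨(h₁.isConnected.dist_eq_zero_iff.mp hm).symm,
        (h₂.isConnected.dist_eq_zero_iff.mp hn).symm⟩
    refine ⟨(fun i => i.elim0, fun j => j.elim0), ⟨fun i => i.elim0, fun j => j.elim0, ?_⟩, ?_⟩
    · simp [hg1]
    · rintro ⟨q1, q2⟩ -
      rw [Prod.mk.injEq]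
      constructor <;> (funext i; exact i.elim0)
  | succ N ih =>
    intro m n g hmn hg hm hn
    rcases n with _ | n
    · rcases m with _ | m
      · exact ih 0 0 g (by omega) hg hm hn
      · -- pull off an A element (B part is trivial)
        obtain ⟨z, hadj, hz⟩ := exists_adj_dist h₁.isConnected hm
        obtain ⟨a, haΓ, hav⟩ := htrans (v₁, v₂) (z, v₂)
        rw [Prod.mk.injEq] at hav
        obtain ⟨hav1, hav2⟩ := hav
        have haA : a ∈ Γ ∧ T₁.dist v₁ (a.1 v₁) = 1 ∧ T₂.dist v₂ (a.2 v₂) = 0 :=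
          ⟨haΓ, by rw [hav1]; exact dist_eq_one_iff_adj.mpr hadj, by rw [hav2]; exact dist_self⟩
        have hg'Γ : a⁻¹ * g ∈ Γ := mul_mem (inv_mem haΓ) hg
        have hg'1 : T₁.dist v₁ ((a⁻¹ * g).1 v₁) = m := by
          show T₁.dist v₁ (a.1⁻¹ (g.1 v₁)) = m
          rw [← iso_dist h₁.isConnected a.1 v₁ (a.1⁻¹ (g.1 v₁)), RelIso.apply_inv_self, hav1]
          exact hz
        have hg'2 : T₂.dist v₂ ((a⁻¹ * g).2 v₂) = 0 := by
          show T₂.dist v₂ (a.2⁻¹ (g.2 v₂)) = 0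
          rw [← iso_dist h₂.isConnected a.2 v₂ (a.2⁻¹ (g.2 v₂)), RelIso.apply_inv_self, hav2]
          exact hn
        obtain ⟨p', hp', huniq⟩ := ih m 0 (a⁻¹ * g) (by omega) hg'Γ hg'1 hg'2
        have hofn : List.ofFn (Fin.cons a p'.2 : Fin (m + 1) → _) = a :: List.ofFn p'.2 := by
          rw [List.ofFn_succ]
          simp [Fin.cons_zero, Fin.cons_succ]
        refine ⟨(p'.1, Fin.cons a p'.2), ⟨hp'.1, ?_, ?_⟩, ?_⟩
        · intro i
          refine Fin.cases ?_ ?_ i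
          · show a ∈ Γ ∧ _ ∧ _
            exact haA
          · intro j
            show p'.2 j ∈ Γ ∧ _ ∧ _
            exact hp'.2.1 j
        · have hB1 : (List.ofFn p'.1).prod = 1 := by
            rw [List.ofFn_zero, List.prod_nil]
          have := hp'.2.2
          rw [hB1, one_mul] at this
          rw [hofn, List.prod_cons, hB1, one_mul, ← this, mul_inv_cancel_left]
        · rintro ⟨q1, q2⟩ ⟨hq1, hq2, hqprod⟩
          have hq2' : List.ofFn q2 = q2 0 :: List.ofFn (Fin.tail q2) := by
            rw [List.ofFn_succ]; rfl
          have hB1 : (List.ofFn q1).prod = 1 := by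
            rw [List.ofFn_zero, List.prod_nil]
          have hprod : g = q2 0 * (List.ofFn (Fin.tail q2)).prod := by
            rw [hqprod, hB1, one_mul, hq2', List.prod_cons]
          have hdR : T₁.dist v₁ (((List.ofFn (Fin.tail q2)).prod).1 v₁) ≤ m := by
            have := prod_dist₁ h₁.isConnected v₁ (List.ofFn (Fin.tail q2))
              (List.forall_mem_ofFn_iff.mpr fun j => le_of_eq (hq2 j.succ).2.1)
            simpa [List.length_ofFn] using this
          have hga : g.1 v₁ = (q2 0).1 (((List.ofFn (Fin.tail q2)).prod).1 v₁) := by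
            rw [hprod]; rfl
          have htri : m + 1 ≤ 1 + T₁.dist v₁ (((List.ofFn (Fin.tail q2)).prod).1 v₁) := by
            calc m + 1 = T₁.dist v₁ (g.1 v₁) := hm.symm
              _ = T₁.dist v₁ ((q2 0).1 (((List.ofFn (Fin.tail q2)).prod).1 v₁)) := by rw [hga]
              _ ≤ T₁.dist v₁ ((q2 0).1 v₁)
                  + T₁.dist ((q2 0).1 v₁) ((q2 0).1 (((List.ofFn (Fin.tail q2)).prod).1 v₁)) :=
                  h₁.isConnected.dist_triangle
              _ = 1 + T₁.dist v₁ (((List.ofFn (Fin.tail q2)).prod).1 v₁) := by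
                  rw [(hq2 0).2.1, iso_dist h₁.isConnected]
          have hdReq : T₁.dist v₁ (((List.ofFn (Fin.tail q2)).prod).1 v₁) = m :=
            le_antisymm hdR (by omega)
          have hdz : T₁.dist ((q2 0).1 v₁) (g.1 v₁) = m := by
            rw [hga, iso_dist h₁.isConnected]; exact hdReq
          have ha₀z : (q2 0).1 v₁ = z :=
            unique_adj_dist h₁ (dist_eq_one_iff_adj.mp (hq2 0).2.1) hadj hm hdz hz
          have ha₀2 : (q2 0).2 v₂ = v₂ :=
            (h₂.isConnected.dist_eq_zero_iff.mp (hq2 0).2.2).symm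
          have ha₀a : q2 0 = a := free_inj hfree (hq2 0).1 haΓ v₁ v₂
            (by rw [ha₀z, hav1]) (by rw [ha₀2, hav2])
          have hg'eq : a⁻¹ * g = (List.ofFn q1).prod * (List.ofFn (Fin.tail q2)).prod := by
            rw [hB1, one_mul, ← ha₀a, hprod, inv_mul_cancel_left]
          have hup : (q1, Fin.tail q2) = p' :=
            huniq (q1, Fin.tail q2) ⟨hq1, fun i => hq2 i.succ, hg'eq⟩
          have e1 : q1 = p'.1 := congrArg Prod.fst hup
          have e2 : Fin.tail q2 = p'.2 := congrArg Prod.snd hup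
          rw [Prod.mk.injEq]
          refine ⟨e1, ?_⟩
          rw [← e2, ← ha₀a]
          exact (Fin.cons_self_tail q2).symm
    · -- pull off a B element
      obtain ⟨z, hadj, hz⟩ := exists_adj_dist h₂.isConnected hn
      obtain ⟨b, hbΓ, hbv⟩ := htrans (v₁, v₂) (v₁, z)
      rw [Prod.mk.injEq] at hbv
      obtain ⟨hbv1, hbv2⟩ := hbv
      have hbB : b ∈ Γ ∧ T₁.dist v₁ (b.1 v₁) = 0 ∧ T₂.dist v₂ (b.2 v₂) = 1 :=
        ⟨hbΓ, by rw [hbv1]; exact dist_self, by rw [hbv2]; exact dist_eq_one_iff_adj.mpr hadj⟩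
      have hg'Γ : b⁻¹ * g ∈ Γ := mul_mem (inv_mem hbΓ) hg
      have hg'1 : T₁.dist v₁ ((b⁻¹ * g).1 v₁) = m := by
        show T₁.dist v₁ (b.1⁻¹ (g.1 v₁)) = m
        rw [← iso_dist h₁.isConnected b.1 v₁ (b.1⁻¹ (g.1 v₁)), RelIso.apply_inv_self, hbv1]
        exact hm
      have hg'2 : T₂.dist v₂ ((b⁻¹ * g).2 v₂) = n := by
        show T₂.dist v₂ (b.2⁻¹ (g.2 v₂)) = n
        rw [← iso_dist h₂.isConnected b.2 v₂ (b.2⁻¹ (g.2 v₂)), RelIso.apply_inv_self, hbv2]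
        exact hz
      obtain ⟨p', hp', huniq⟩ := ih m n (b⁻¹ * g) (by omega) hg'Γ hg'1 hg'2
      have hofn : List.ofFn (Fin.cons b p'.1 : Fin (n + 1) → _) = b :: List.ofFn p'.1 := by
        rw [List.ofFn_succ]
        simp [Fin.cons_zero, Fin.cons_succ]
      refine ⟨(Fin.cons b p'.1, p'.2), ⟨?_, hp'.2.1, ?_⟩, ?_⟩
      · intro j
        refine Fin.cases ?_ ?_ j
        · show b ∈ Γ ∧ _ ∧ _
          exact hbB
        · intro i
          show p'.1 i ∈ Γ ∧ _ ∧ _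
          exact hp'.1 i
      · rw [hofn, List.prod_cons, mul_assoc, ← hp'.2.2, mul_inv_cancel_left]
      · rintro ⟨q1, q2⟩ ⟨hq1, hq2, hqprod⟩
        have hq1' : List.ofFn q1 = q1 0 :: List.ofFn (Fin.tail q1) := by
          rw [List.ofFn_succ]; rfl
        have hprod : g = q1 0 * ((List.ofFn (Fin.tail q1)).prod * (List.ofFn q2).prod) := by
          rw [hqprod, hq1', List.prod_cons, mul_assoc]
        have hQ2 : ((List.ofFn q2).prod).2 v₂ = v₂ :=
          prod_fix₂ v₂ _ (List.forall_mem_ofFn_iff.mpr fun i =>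
            (h₂.isConnected.dist_eq_zero_iff.mp (hq2 i).2.2).symm)
        have hdR : T₂.dist v₂ (((List.ofFn (Fin.tail q1)).prod).2 v₂) ≤ n := by
          have := prod_dist₂ h₂.isConnected v₂ (List.ofFn (Fin.tail q1))
            (List.forall_mem_ofFn_iff.mpr fun j => le_of_eq (hq1 j.succ).2.2)
          simpa [List.length_ofFn] using this
        have hRQ : (((List.ofFn (Fin.tail q1)).prod * (List.ofFn q2).prod)).2 v₂
            = ((List.ofFn (Fin.tail q1)).prod).2 v₂ := by
          show ((List.ofFn (Fin.tail q1)).prod).2 (((List.ofFn q2).prod).2 v₂) = _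
          rw [hQ2]
        have hga : g.2 v₂ = (q1 0).2 (((List.ofFn (Fin.tail q1)).prod).2 v₂) := by
          rw [hprod]
          show (q1 0).2 ((((List.ofFn (Fin.tail q1)).prod * (List.ofFn q2).prod)).2 v₂) = _
          rw [hRQ]
        have htri : n + 1 ≤ 1 + T₂.dist v₂ (((List.ofFn (Fin.tail q1)).prod).2 v₂) := by
          calc n + 1 = T₂.dist v₂ (g.2 v₂) := hn.symm
            _ = T₂.dist v₂ ((q1 0).2 (((List.ofFn (Fin.tail q1)).prod).2 v₂)) := by rw [hga]
            _ ≤ T₂.dist v₂ ((q1 0).2 v₂)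
                + T₂.dist ((q1 0).2 v₂) ((q1 0).2 (((List.ofFn (Fin.tail q1)).prod).2 v₂)) :=
                h₂.isConnected.dist_triangle
            _ = 1 + T₂.dist v₂ (((List.ofFn (Fin.tail q1)).prod).2 v₂) := by
                rw [(hq1 0).2.2, iso_dist h₂.isConnected]
        have hdReq : T₂.dist v₂ (((List.ofFn (Fin.tail q1)).prod).2 v₂) = n :=
          le_antisymm hdR (by omega)
        have hdz : T₂.dist ((q1 0).2 v₂) (g.2 v₂) = n := by
          rw [hga, iso_dist h₂.isConnected]; exact hdReq
        have hb₀z : (q1 0).2 v₂ = z :=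
          unique_adj_dist h₂ (dist_eq_one_iff_adj.mp (hq1 0).2.2) hadj hn hdz hz
        have hb₀1 : (q1 0).1 v₁ = v₁ :=
          (h₁.isConnected.dist_eq_zero_iff.mp (hq1 0).2.1).symm
        have hb₀b : q1 0 = b := free_inj hfree (hq1 0).1 hbΓ v₁ v₂
          (by rw [hb₀1, hbv1]) (by rw [hb₀z, hbv2])
        have hg'eq : b⁻¹ * g = (List.ofFn (Fin.tail q1)).prod * (List.ofFn q2).prod := by
          rw [← hb₀b, hprod, inv_mul_cancel_left]
        have hup : (Fin.tail q1, q2) = p' :=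
          huniq (Fin.tail q1, q2) ⟨fun j => hq1 j.succ, hq2, hg'eq⟩
        have e1 : Fin.tail q1 = p'.1 := congrArg Prod.fst hup
        have e2 : q2 = p'.2 := congrArg Prod.snd hup
        rw [Prod.mk.injEq]
        refine ⟨?_, e2⟩
        rw [← e1, ← hb₀b]
        exact (Fin.cons_self_tail q1).symm

/-- Normal form for elements of a group acting freely and
transitively on the vertex set of a product of two trees: each `g ∈ Γ` of shape
`(m,n)` has unique expressions `g = a₁⋯a_m b₁⋯b_n` and `g = b′₁⋯b′_n a′₁⋯a′_m`
with `aᵢ, a′ᵢ ∈ A` and `bⱼ, b′ⱼ ∈ B`. -/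
theorem normal_form {V₁ V₂ : Type*}
    (T₁ : SimpleGraph V₁) (T₂ : SimpleGraph V₂)
    (h₁ : T₁.IsTree) (h₂ : T₂.IsTree)
    (Γ : Subgroup ((T₁ ≃g T₁) × (T₂ ≃g T₂)))
    (hfree : ∀ g ∈ Γ, (∃ u : V₁ × V₂, (g.1 u.1, g.2 u.2) = u) → g = 1)
    (htrans : ∀ u w : V₁ × V₂, ∃ g ∈ Γ, (g.1 u.1, g.2 u.2) = w)
    (v₁ : V₁) (v₂ : V₂)
    (A B : Set ((T₁ ≃g T₁) × (T₂ ≃g T₂)))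
    (hA : A = {g | g ∈ Γ ∧ T₁.dist v₁ (g.1 v₁) = 1 ∧ T₂.dist v₂ (g.2 v₂) = 0})
    (hB : B = {g | g ∈ Γ ∧ T₁.dist v₁ (g.1 v₁) = 0 ∧ T₂.dist v₂ (g.2 v₂) = 1})
    (g : (T₁ ≃g T₁) × (T₂ ≃g T₂)) (hg : g ∈ Γ) (m n : ℕ)
    (hm : T₁.dist v₁ (g.1 v₁) = m) (hn : T₂.dist v₂ (g.2 v₂) = n) :
    (∃! p : (Fin m → (T₁ ≃g T₁) × (T₂ ≃g T₂)) × (Fin n → (T₁ ≃g T₁) × (T₂ ≃g T₂)),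
      (∀ i, p.1 i ∈ A) ∧ (∀ j, p.2 j ∈ B) ∧
        g = (List.ofFn p.1).prod * (List.ofFn p.2).prod) ∧
    (∃! q : (Fin n → (T₁ ≃g T₁) × (T₂ ≃g T₂)) × (Fin m → (T₁ ≃g T₁) × (T₂ ≃g T₂)),
      (∀ j, q.1 j ∈ B) ∧ (∀ i, q.2 i ∈ A) ∧
        g = (List.ofFn q.1).prod * (List.ofFn q.2).prod) := by
  subst hA hB
  exact ⟨key h₁ h₂ Γ hfree htrans v₁ v₂ (m + n) m n g le_rfl hg hm hn,
    key₂ h₁ h₂ Γ hfree htrans v₁ v₂ (m + n) m n g le_rfl hg hm hn⟩
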